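/- arXiv:1506.01370 — 4 statements merged into one kernel-verified Lean document; each statement's English description precedes it below -/
import Mathlib

section
/- Let G be a connected locally finite graph with edge set E, let e ∈ E, and let λ, λ' : E → [0,1] be injective labellings that agree on every edge other than e. If e ∈ F_F(λ) and λ'(e) < Z_λ(e), then F_F(λ') = F_F(λ). -/
namespace MSF

variable {V : Type*}

/-- The free minimal spanning forest of an (injective) labelling: the set of edges `e` such
that there is no finite cycle of `G` containing `e` on which `lab e` is the maximal label. -/
def setFF (G : SimpleGraph V) (lab : G.edgeSet → ℝ) : Set G.edgeSet :=
  {e | ¬ ∃ (v : V) (c : G.Walk v v), c.IsCycle ∧ (e : Sym2 V) ∈ c.edges ∧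
    ∀ e' : G.edgeSet, (e' : Sym2 V) ∈ c.edges → lab e' ≤ lab e}

/-- `Z_lab(e)`: the infimum, over finite cycles `C` of `G` containing `e`, of the maximal
label on `C \ {e}` (equal to `∞` if no finite cycle contains `e`). -/
noncomputable def Z (G : SimpleGraph V) (lab : G.edgeSet → ℝ) (e : G.edgeSet) : ENNReal :=
  ⨅ (v : V) (c : {c : G.Walk v v // c.IsCycle ∧ (e : Sym2 V) ∈ c.edges}),
    sSup {x : ENNReal | ∃ e' : G.edgeSet,
      (e' : Sym2 V) ∈ (c : G.Walk v v).edges ∧ e' ≠ e ∧ x = ENNReal.ofReal (lab e')}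

/-- `f` attains the infimum in the definition of `Z_lab(e)`: `f ≠ e` lies on a finite cycle
through `e` on which it has the maximal label among the edges `≠ e`, and this label equals
`Z_lab(e)`. -/
def Attains (G : SimpleGraph V) (lab : G.edgeSet → ℝ) (e f : G.edgeSet) : Prop :=
  f ≠ e ∧ ENNReal.ofReal (lab f) = Z G lab e ∧
    ∃ (v : V) (c : G.Walk v v), c.IsCycle ∧ (e : Sym2 V) ∈ c.edges ∧
      (f : Sym2 V) ∈ c.edges ∧
      ∀ e' : G.edgeSet, (e' : Sym2 V) ∈ c.edges → e' ≠ e → lab e' ≤ lab f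

/-- `φ(e,lab)`: the edge attaining the infimum in `Z_lab(e)` if it exists, `∅` otherwise. -/
noncomputable def phi (G : SimpleGraph V) (lab : G.edgeSet → ℝ) (e : G.edgeSet) :
    Option G.edgeSet := by
  classical exact if h : ∃ f, Attains G lab e f then some h.choose else none

/-- If `e ∈ F_F(lab)` and `lab' e < Z_lab(e)` then `F_F(lab') = F_F(lab)`. -/
theorem setFF_eq_of_mem_of_lt
    {V : Type*} (G : SimpleGraph V) (hconn : G.Connected)
    (hlf : ∀ v : V, (G.neighborSet v).Finite)
    (e : G.edgeSet) (lab lab' : G.edgeSet → ℝ)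
    (hinj : Function.Injective lab) (hinj' : Function.Injective lab')
    (hrange : ∀ e' : G.edgeSet, lab e' ∈ Set.Icc (0 : ℝ) 1)
    (hrange' : ∀ e' : G.edgeSet, lab' e' ∈ Set.Icc (0 : ℝ) 1)
    (hagree : ∀ e' : G.edgeSet, e' ≠ e → lab' e' = lab e')
    (hmem : e ∈ setFF G lab) (hlt : ENNReal.ofReal (lab' e) < Z G lab e) :
    setFF G lab' = setFF G lab := by
  have key : ∀ (v : V) (c : G.Walk v v) (hc : c.IsCycle) (he : (e : Sym2 V) ∈ c.edges),
      Z G lab e ≤ sSup {x : ENNReal | ∃ e' : G.edgeSet,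
        (e' : Sym2 V) ∈ c.edges ∧ e' ≠ e ∧ x = ENNReal.ofReal (lab e')} := by
    intro v c hc he
    exact iInf_le_of_le v (iInf_le _ (⟨c, hc, he⟩ : {c : G.Walk v v // c.IsCycle ∧ (e : Sym2 V) ∈ c.edges}))
  have hemem' : e ∈ setFF G lab' := by
    rintro ⟨v, c, hc, he, hmax⟩
    have h1 : Z G lab e ≤ ENNReal.ofReal (lab' e) := by
      refine le_trans (key v c hc he) (sSup_le ?_)
      rintro x ⟨e', he', hne, rfl⟩
      have h2 : lab e' ≤ lab' e := by
        have := hmax e' he'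
        rw [hagree e' hne] at this
        exact this
      exact ENNReal.ofReal_le_ofReal h2
    exact absurd hlt (not_lt.2 h1)
  ext f
  by_cases hfe : f = e
  · subst hfe; exact ⟨fun _ => hmem, fun _ => hemem'⟩
  · have hF : lab' f = lab f := hagree f hfe
    simp only [setFF, Set.mem_setOf_eq]
    apply not_congr
    constructor
    · rintro ⟨v, c, hc, hf, hmax'⟩
      refine ⟨v, c, hc, hf, ?_⟩
      intro e' he'
      by_cases h : e' = e
      · subst h
        have hne : ¬ (∀ g : G.edgeSet, (g : Sym2 V) ∈ c.edges → lab g ≤ lab e') :=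
          fun hall => hmem ⟨v, c, hc, he', hall⟩
        push_neg at hne
        obtain ⟨g, hg, hgl⟩ := hne
        have hge : g ≠ e' := fun h => by subst h; exact lt_irrefl _ hgl
        have hgf : lab g ≤ lab f := by
          have := hmax' g hg
          rwa [hagree g hge, hF] at this
        linarith
      · have := hmax' e' he'
        rwa [hagree e' h, hF] at this
    · rintro ⟨v, c, hc, hf, hmax⟩
      refine ⟨v, c, hc, hf, ?_⟩
      intro e' he'
      by_cases h : e' = e
      · subst h
        have hsup : sSup {x : ENNReal | ∃ g : G.edgeSet,
            (g : Sym2 V) ∈ c.edges ∧ g ≠ e' ∧ x = ENNReal.ofReal (lab g)}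
            ≤ ENNReal.ofReal (lab f) := by
          apply sSup_le
          rintro x ⟨g, hg, hgne, rfl⟩
          exact ENNReal.ofReal_le_ofReal (hmax g hg)
        have hlt2 : ENNReal.ofReal (lab' e') < ENNReal.ofReal (lab f) :=
          lt_of_lt_of_le hlt (le_trans (key v c hc he') hsup)
        have h2 : lab' e' < lab f := by
          by_contra hcon
          exact absurd (ENNReal.ofReal_le_ofReal (not_lt.1 hcon)) (not_le.2 hlt2)
        rw [hF]; exact le_of_lt h2
      · rw [hagree e' h, hF]; exact hmax e' he'

end MSF
end

section
/- Let G be a connected locally finite graph with edge set E, let e ∈ E, and let λ, λ' : E → [0,1] be injective labellings that agree on every edge other than e. If e ∈ F_F(λ) and λ'(e) > Z_λ(e), then F_F(λ') = (F_F(λ) ∖ {e}) ∪ {φ(e,λ)}, where {φ(e,λ)} is read as the empty set if φ(e,λ) = ∅. -/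
namespace MSF

variable {V : Type*}

/-- From a closed trail containing an edge `s(a,b)`, extract a walk from `a` to `b`
avoiding `s(a,b)` and using only edges of the trail. -/
lemma exists_walk_of_closed_trail {G : SimpleGraph V} {u a b : V} (c : G.Walk u u)
    (hc : c.IsTrail) (he : s(a, b) ∈ c.edges) :
    ∃ p : G.Walk a b, s(a, b) ∉ p.edges ∧ ∀ z ∈ p.edges, z ∈ c.edges := by
  classical
  have ha : a ∈ c.support := c.fst_mem_support_of_mem_edges he
  set d := c.rotate a ha with hd_def
  have hd : d.IsTrail := hc.rotate ha
  have hmem : ∀ z : Sym2 V, z ∈ d.edges ↔ z ∈ c.edges := fun z => (c.rotate_edges a ha).mem_iff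
  have he' : s(a, b) ∈ d.edges := (hmem _).2 he
  have hb : b ∈ d.support := d.snd_mem_support_of_mem_edges he'
  have hspec : (d.takeUntil b hb).append (d.dropUntil b hb) = d := d.take_spec hb
  have hedges : d.edges = (d.takeUntil b hb).edges ++ (d.dropUntil b hb).edges := by
    conv_lhs => rw [← hspec]
    exact SimpleGraph.Walk.edges_append _ _
  have hnodup : ((d.takeUntil b hb).edges ++ (d.dropUntil b hb).edges).Nodup := by
    rw [← hedges]; exact hd.edges_nodup
  have hdisj := List.disjoint_of_nodup_append hnodup
  have he'' := he'
  rw [hedges, List.mem_append] at he''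
  rcases he'' with h1 | h2
  · refine ⟨(d.dropUntil b hb).reverse, ?_, ?_⟩
    · rw [SimpleGraph.Walk.edges_reverse, List.mem_reverse]
      exact fun h => hdisj h1 h
    · intro z hz
      rw [SimpleGraph.Walk.edges_reverse, List.mem_reverse] at hz
      rw [← hmem z, hedges, List.mem_append]; exact Or.inr hz
  · refine ⟨d.takeUntil b hb, ?_, ?_⟩
    · exact fun h => hdisj h h2
    · intro z hz
      rw [← hmem z, hedges, List.mem_append]; exact Or.inl hz

/-- Replace every use of the edge `s(x,y)` in a walk by a detour walk `q` avoiding it. -/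
lemma exists_walk_avoid {G : SimpleGraph V} {x y a b : V} (w : G.Walk a b)
    (q : G.Walk x y) (hq : s(x, y) ∉ q.edges) :
    ∃ p : G.Walk a b, ∀ z ∈ p.edges, z ≠ s(x, y) ∧ (z ∈ w.edges ∨ z ∈ q.edges) := by
  induction w with
  | nil => exact ⟨SimpleGraph.Walk.nil, by simp⟩
  | @cons u c b h w ih =>
    obtain ⟨p, hp⟩ := ih
    by_cases hxy : s(u, c) = s(x, y)
    · rw [Sym2.eq_iff] at hxy
      rcases hxy with ⟨hux, hcy⟩ | ⟨huy, hcx⟩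
      · refine ⟨(q.copy hux.symm hcy.symm).append p, ?_⟩
        intro z hz
        rw [SimpleGraph.Walk.edges_append, List.mem_append, SimpleGraph.Walk.edges_copy] at hz
        rcases hz with hz | hz
        · exact ⟨fun hzz => hq (hzz ▸ hz), Or.inr hz⟩
        · obtain ⟨h1, h2⟩ := hp z hz
          refine ⟨h1, h2.imp (fun hh => ?_) id⟩
          rw [SimpleGraph.Walk.edges_cons]; exact List.mem_cons_of_mem _ hh
      · refine ⟨(q.reverse.copy huy.symm hcx.symm).append p, ?_⟩
        intro z hz
        rw [SimpleGraph.Walk.edges_append, List.mem_append, SimpleGraph.Walk.edges_copy,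
          SimpleGraph.Walk.edges_reverse, List.mem_reverse] at hz
        rcases hz with hz | hz
        · exact ⟨fun hzz => hq (hzz ▸ hz), Or.inr hz⟩
        · obtain ⟨h1, h2⟩ := hp z hz
          refine ⟨h1, h2.imp (fun hh => ?_) id⟩
          rw [SimpleGraph.Walk.edges_cons]; exact List.mem_cons_of_mem _ hh
    · refine ⟨SimpleGraph.Walk.cons h p, ?_⟩
      intro z hz
      rw [SimpleGraph.Walk.edges_cons, List.mem_cons] at hz
      rcases hz with rfl | hz
      · exact ⟨hxy, Or.inl (by rw [SimpleGraph.Walk.edges_cons]; exact List.mem_cons_self)⟩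
      · obtain ⟨h1, h2⟩ := hp z hz
        refine ⟨h1, h2.imp (fun hh => ?_) id⟩
        rw [SimpleGraph.Walk.edges_cons]; exact List.mem_cons_of_mem _ hh

/-- Cycle exchange: if `x` lies on cycles `c₁` and `c₂`, and `y = s(a,b)` lies on `c₁` but
not on `c₂` and `y ≠ x`, then there is a cycle through `y` avoiding `x`, inside the union. -/
lemma exchange {G : SimpleGraph V} {u v a b : V} {x : Sym2 V}
    (c₁ : G.Walk u u) (hc₁ : c₁.IsCycle) (c₂ : G.Walk v v) (hc₂ : c₂.IsTrail)
    (hx1 : x ∈ c₁.edges) (hx2 : x ∈ c₂.edges) (hy1 : s(a, b) ∈ c₁.edges)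
    (hyx : s(a, b) ≠ x) (hy2 : s(a, b) ∉ c₂.edges) :
    ∃ (w : V) (c : G.Walk w w), c.IsCycle ∧ s(a, b) ∈ c.edges ∧
      ∀ z ∈ c.edges, z ≠ s(a, b) → z ≠ x ∧ (z ∈ c₁.edges ∨ z ∈ c₂.edges) := by
  classical
  obtain ⟨p', q', rfl⟩ : ∃ p' q', x = s(p', q') := Sym2.ind (fun p q => ⟨p, q, rfl⟩) x
  obtain ⟨w₁, hw₁y, hw₁⟩ := exists_walk_of_closed_trail c₁ hc₁.isTrail hy1
  obtain ⟨q₂, hq₂x, hq₂⟩ := exists_walk_of_closed_trail c₂ hc₂ hx2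
  obtain ⟨w₂, hw₂⟩ := exists_walk_avoid w₁ q₂ hq₂x
  have hadj : G.Adj a b := c₁.adj_of_mem_edges hy1
  set P := w₂.toPath with hP
  have hPy : s(a, b) ∉ (P : G.Walk a b).edges := by
    intro h
    have h' := SimpleGraph.Walk.edges_toPath_subset w₂ h
    obtain ⟨_, h2⟩ := hw₂ _ h'
    rcases h2 with h2 | h2
    · exact hw₁y h2
    · exact hy2 (hq₂ _ h2)
  have hPy' : s(b, a) ∉ (P : G.Walk a b).edges := by rwa [Sym2.eq_swap]
  refine ⟨b, SimpleGraph.Walk.cons hadj.symm (P : G.Walk a b), P.cons_isCycle hadj.symm hPy', ?_, ?_⟩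
  · rw [SimpleGraph.Walk.edges_cons, Sym2.eq_swap]
    exact List.mem_cons_self
  · intro z hz hzy
    rw [SimpleGraph.Walk.edges_cons, List.mem_cons] at hz
    rcases hz with rfl | hz
    · exact absurd Sym2.eq_swap hzy.symm
    · have h' := SimpleGraph.Walk.edges_toPath_subset w₂ hz
      obtain ⟨h1, h2⟩ := hw₂ _ h'
      exact ⟨h1, h2.imp (fun hh => hw₁ _ hh) (fun hh => hq₂ _ hh)⟩

/-- The sup appearing in the definition of `Z`, for a given cycle. -/
lemma Z_le_sup {G : SimpleGraph V} (lab : G.edgeSet → ℝ) (e : G.edgeSet) {v : V}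
    (c : G.Walk v v) (hc : c.IsCycle) (hce : (e : Sym2 V) ∈ c.edges) :
    Z G lab e ≤ sSup {x : ENNReal | ∃ e' : G.edgeSet,
      (e' : Sym2 V) ∈ c.edges ∧ e' ≠ e ∧ x = ENNReal.ofReal (lab e')} :=
  iInf_le_of_le v (iInf_le_of_le ⟨c, hc, hce⟩ le_rfl)

lemma exists_cycle_of_Z_lt {G : SimpleGraph V} {lab : G.edgeSet → ℝ} {e : G.edgeSet}
    {a : ENNReal} (h : Z G lab e < a) :
    ∃ (v : V) (c : G.Walk v v), c.IsCycle ∧ (e : Sym2 V) ∈ c.edges ∧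
      sSup {x : ENNReal | ∃ e' : G.edgeSet,
        (e' : Sym2 V) ∈ c.edges ∧ e' ≠ e ∧ x = ENNReal.ofReal (lab e')} < a := by
  rw [Z, iInf_lt_iff] at h
  obtain ⟨v, h⟩ := h
  rw [iInf_lt_iff] at h
  obtain ⟨⟨c, hc, hce⟩, h⟩ := h
  exact ⟨v, c, hc, hce, h⟩

/-- On a cycle through `e`, the sup over the other edges is attained. -/
lemma sup_attained {G : SimpleGraph V} (lab : G.edgeSet → ℝ) (e : G.edgeSet) {v : V}
    (c : G.Walk v v) (hc : c.IsCycle) (hce : (e : Sym2 V) ∈ c.edges) :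
    ∃ e'' : G.edgeSet, (e'' : Sym2 V) ∈ c.edges ∧ e'' ≠ e ∧
      sSup {x : ENNReal | ∃ e' : G.edgeSet,
        (e' : Sym2 V) ∈ c.edges ∧ e' ≠ e ∧ x = ENNReal.ofReal (lab e')}
        = ENNReal.ofReal (lab e'') := by
  classical
  set S := {x : ENNReal | ∃ e' : G.edgeSet,
    (e' : Sym2 V) ∈ c.edges ∧ e' ≠ e ∧ x = ENNReal.ofReal (lab e')} with hS
  -- S is finite
  have hfin : S.Finite := by
    have h1 : {e' : G.edgeSet | (e' : Sym2 V) ∈ c.edges}.Finite := by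
      have := c.edges.finite_toSet
      exact this.preimage (Subtype.val_injective.injOn)
    refine (h1.image (fun e' => ENNReal.ofReal (lab e'))).subset ?_
    rintro x ⟨e', h1, h2, rfl⟩
    exact ⟨e', h1, rfl⟩
  -- S is nonempty: take another edge of the cycle
  have hz : ∃ z ∈ c.edges, z ≠ (e : Sym2 V) := by
    by_contra hcon
    push_neg at hcon
    have hlen : 3 ≤ c.edges.length := by rw [c.length_edges]; exact hc.three_le_length
    have hcount : c.edges.count (e : Sym2 V) = c.edges.length :=
      List.count_eq_length.2 (fun b hb => (hcon b hb).symm)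
    have hone := List.nodup_iff_count_le_one.1 hc.edges_nodup (e : Sym2 V)
    omega
  obtain ⟨z, hzc, hze⟩ := hz
  have hzE : z ∈ G.edgeSet := c.edges_subset_edgeSet hzc
  have hne : S.Nonempty := ⟨ENNReal.ofReal (lab ⟨z, hzE⟩), ⟨z, hzE⟩, hzc,
    fun h => hze (congrArg Subtype.val h), rfl⟩
  have := Set.Nonempty.csSup_mem hne hfin
  rw [hS] at this
  obtain ⟨e'', h1, h2, h3⟩ := this
  exact ⟨e'', h1, h2, h3⟩

/-- If `e ∈ F_F(lab)` and `lab' e > Z_lab(e)` then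
`F_F(lab') = (F_F(lab) \ {e}) ∪ {φ(e,lab)}`. -/
theorem setFF_eq_of_mem_of_gt
    {V : Type*} (G : SimpleGraph V) (hconn : G.Connected)
    (hlf : ∀ v : V, (G.neighborSet v).Finite)
    (e : G.edgeSet) (lab lab' : G.edgeSet → ℝ)
    (hinj : Function.Injective lab) (hinj' : Function.Injective lab')
    (hrange : ∀ e' : G.edgeSet, lab e' ∈ Set.Icc (0 : ℝ) 1)
    (hrange' : ∀ e' : G.edgeSet, lab' e' ∈ Set.Icc (0 : ℝ) 1)
    (hagree : ∀ e' : G.edgeSet, e' ≠ e → lab' e' = lab e')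
    (hmem : e ∈ setFF G lab) (hgt : Z G lab e < ENNReal.ofReal (lab' e)) :
    setFF G lab' = (setFF G lab \ {e}) ∪ {f | phi G lab e = some f} := by
  classical
  have h0 : ∀ e' : G.edgeSet, 0 ≤ lab e' := fun e' => (hrange e').1
  have h0' : ∀ e' : G.edgeSet, 0 ≤ lab' e' := fun e' => (hrange' e').1
  -- Step 1: e ∉ setFF G lab'
  obtain ⟨v₀, c₀, hc₀, hce₀, hsup₀⟩ := exists_cycle_of_Z_lt hgt
  have heFF' : e ∉ setFF G lab' := by
    intro hmem'
    refine hmem' ⟨v₀, c₀, hc₀, hce₀, fun e' he' => ?_⟩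
    by_cases hee : e' = e
    · exact le_of_eq (congrArg lab' hee)
    · have hmm : ENNReal.ofReal (lab e') ∈ {x : ENNReal | ∃ e' : G.edgeSet,
        (e' : Sym2 V) ∈ c₀.edges ∧ e' ≠ e ∧ x = ENNReal.ofReal (lab e')} := ⟨e', he', hee, rfl⟩
      have h2 := lt_of_le_of_lt (le_sSup hmm) hsup₀
      have h3 := (ENNReal.ofReal_lt_ofReal_iff_of_nonneg (h0 e')).1 h2
      rw [hagree e' hee]
      linarith
  -- Step 2: lab e < lab' e
  have hZge : ENNReal.ofReal (lab e) ≤ Z G lab e := by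
    rw [Z]
    refine le_iInf fun v => le_iInf fun cc => ?_
    obtain ⟨c, hc, hce⟩ := cc
    show ENNReal.ofReal (lab e) ≤ sSup {x : ENNReal | ∃ e' : G.edgeSet,
      (e' : Sym2 V) ∈ c.edges ∧ e' ≠ e ∧ x = ENNReal.ofReal (lab e')}
    have hnall : ¬ ∀ e' : G.edgeSet, (e' : Sym2 V) ∈ c.edges → lab e' ≤ lab e :=
      fun hall => hmem ⟨v, c, hc, hce, hall⟩
    push_neg at hnall
    obtain ⟨e', he'c, he'gt⟩ := hnall
    have hne : e' ≠ e := fun h => by subst h; exact lt_irrefl _ he'gt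
    have hmm : ENNReal.ofReal (lab e') ∈ {x : ENNReal | ∃ e'' : G.edgeSet,
      (e'' : Sym2 V) ∈ c.edges ∧ e'' ≠ e ∧ x = ENNReal.ofReal (lab e'')} := ⟨e', he'c, hne, rfl⟩
    exact le_trans (ENNReal.ofReal_le_ofReal he'gt.le) (le_sSup hmm)
  have hlablt : lab e < lab' e :=
    (ENNReal.ofReal_lt_ofReal_iff_of_nonneg (h0 e)).1 (lt_of_le_of_lt hZge hgt)
  ext f
  simp only [Set.mem_union, Set.mem_diff, Set.mem_singleton_iff, Set.mem_setOf_eq]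
  constructor
  · -- forward inclusion
    intro hf
    have hfe : f ≠ e := fun h => heFF' (h ▸ hf)
    by_cases hfF : f ∈ setFF G lab
    · exact Or.inl ⟨hfF, hfe⟩
    · right
      have hfF2 : ∃ (v : V) (c : G.Walk v v), c.IsCycle ∧ (f : Sym2 V) ∈ c.edges ∧
          ∀ e' : G.edgeSet, (e' : Sym2 V) ∈ c.edges → lab e' ≤ lab f := by
        simpa only [setFF, Set.mem_setOf_eq, not_not] using hfF
      obtain ⟨v, c, hc, hfc, hall⟩ := hfF2
      by_cases hec : (e : Sym2 V) ∈ c.edges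
      · -- e lies on the bad cycle of f
        have hsuple : sSup {x : ENNReal | ∃ e' : G.edgeSet,
            (e' : Sym2 V) ∈ c.edges ∧ e' ≠ e ∧ x = ENNReal.ofReal (lab e')}
            ≤ ENNReal.ofReal (lab f) := by
          refine sSup_le ?_
          rintro x ⟨e', h1, _, rfl⟩
          exact ENNReal.ofReal_le_ofReal (hall e' h1)
        have hZle : Z G lab e ≤ ENNReal.ofReal (lab f) :=
          le_trans (Z_le_sup lab e c hc hec) hsuple
        rcases eq_or_lt_of_le hZle with heq | hlt
        · -- f attains the infimum
          have hAtt : Attains G lab e f :=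
            ⟨hfe, heq.symm, v, c, hc, hec, hfc, fun e' h1 _ => hall e' h1⟩
          have hex : ∃ g, Attains G lab e g := ⟨f, hAtt⟩
          have hg := hex.choose_spec
          have hgf : hex.choose = f := by
            apply hinj
            have h1 : ENNReal.ofReal (lab hex.choose) = ENNReal.ofReal (lab f) := by
              rw [hg.2.1, hAtt.2.1]
            exact (ENNReal.ofReal_eq_ofReal_iff (h0 _) (h0 _)).1 h1
          show phi G lab e = some f
          unfold phi
          rw [dif_pos hex, hgf]
        · -- Z < lab f : exchange argument contradicts f ∈ setFF lab'
          exfalso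
          obtain ⟨v₂, c₂, hc₂, hec₂, hsup₂⟩ := exists_cycle_of_Z_lt hlt
          have hfc₂ : (f : Sym2 V) ∉ c₂.edges := by
            intro hmem2
            have hmm : ENNReal.ofReal (lab f) ∈ {x : ENNReal |
              ∃ e' : G.edgeSet, (e' : Sym2 V) ∈ c₂.edges ∧ e' ≠ e ∧
                x = ENNReal.ofReal (lab e')} := ⟨f, hmem2, hfe, rfl⟩
            exact absurd (lt_of_le_of_lt (le_sSup hmm) hsup₂) (lt_irrefl _)
          obtain ⟨a, b, hab⟩ : ∃ a b, (f : Sym2 V) = s(a, b) :=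
            Sym2.ind (fun a b => ⟨a, b, rfl⟩) (f : Sym2 V)
          obtain ⟨w, c', hc', hfc', hrest⟩ := exchange c hc c₂ hc₂.isTrail hec hec₂
            (hab ▸ hfc) (by rw [← hab]; exact fun h => hfe (Subtype.ext h))
            (by rw [← hab]; exact hfc₂)
          refine hf ⟨w, c', hc', by rw [hab]; exact hfc', fun e' he' => ?_⟩
          by_cases hef' : e' = f
          · exact le_of_eq (congrArg lab' hef')
          · have hcoe : (e' : Sym2 V) ≠ s(a, b) := by
              rw [← hab]; exact fun h => hef' (Subtype.ext h)
            obtain ⟨hne, hmem'⟩ := hrest (e' : Sym2 V) he' hcoe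
            have hee : e' ≠ e := fun h => hne (congrArg Subtype.val h)
            rw [hagree e' hee, hagree f hfe]
            rcases hmem' with hm | hm
            · exact hall e' hm
            · have hmm : ENNReal.ofReal (lab e') ∈ {x : ENNReal |
                ∃ e'' : G.edgeSet, (e'' : Sym2 V) ∈ c₂.edges ∧ e'' ≠ e ∧
                  x = ENNReal.ofReal (lab e'')} := ⟨e', hm, hee, rfl⟩
              have h2 := lt_of_le_of_lt (le_sSup hmm) hsup₂
              exact ((ENNReal.ofReal_lt_ofReal_iff_of_nonneg (h0 e')).1 h2).le
      · -- e not on the cycle: contradicts f ∈ setFF lab'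
        exfalso
        refine hf ⟨v, c, hc, hfc, fun e' he' => ?_⟩
        have hee : e' ≠ e := fun h => hec (h ▸ he')
        rw [hagree e' hee, hagree f hfe]
        exact hall e' he'
  · -- backward inclusion
    rintro (⟨hfF, hfe⟩ | hphi)
    · -- f ∈ setFF lab, f ≠ e : f ∈ setFF lab'
      intro hx
      obtain ⟨v, c, hc, hfc, hall⟩ := hx
      refine hfF ⟨v, c, hc, hfc, fun e' he' => ?_⟩
      by_cases hee : e' = e
      · have h1 : lab' e ≤ lab' f := hall e (hee ▸ he')
        have h2 : lab' f = lab f := hagree f hfe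
        rw [hee]
        linarith
      · have h1 := hall e' he'
        rw [hagree e' hee, hagree f hfe] at h1
        exact h1
    · -- f = phi
      have hAtt : Attains G lab e f := by
        unfold phi at hphi
        split at hphi
        · next h =>
            have hspec := h.choose_spec
            rw [Option.some.injEq] at hphi
            rwa [hphi] at hspec
        · exact absurd hphi (by simp)
      obtain ⟨hfe, hZf, v₁, c₁, hc₁, hec₁, hfc₁, hbd₁⟩ := hAtt
      intro hx
      obtain ⟨v, c, hc, hfc, hall⟩ := hx
      by_cases hec : (e : Sym2 V) ∈ c.edges
      · -- e on the cycle: lab' e ≤ lab f but lab f < lab' e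
        have h1 : lab' e ≤ lab f := by
          have := hall e hec
          rwa [hagree f hfe] at this
        have h2 : lab f < lab' e :=
          (ENNReal.ofReal_lt_ofReal_iff_of_nonneg (h0 f)).1 (by rw [hZf]; exact hgt)
        linarith
      · -- exchange: build a cycle through e avoiding f with small labels
        obtain ⟨a, b, hab⟩ : ∃ a b, (e : Sym2 V) = s(a, b) :=
          Sym2.ind (fun a b => ⟨a, b, rfl⟩) (e : Sym2 V)
        obtain ⟨w, c', hc', hec', hrest⟩ := exchange c₁ hc₁ c hc.isTrail hfc₁ hfc
          (hab ▸ hec₁) (by rw [← hab]; exact fun h => hfe (Subtype.ext h.symm))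
          (by rw [← hab]; exact hec)
        have hec'' : (e : Sym2 V) ∈ c'.edges := by rw [hab]; exact hec'
        -- all labels ≠ e on c' are ≤ lab f, and none equals f
        have hbound : ∀ e' : G.edgeSet, (e' : Sym2 V) ∈ c'.edges → e' ≠ e →
            e' ≠ f ∧ lab e' ≤ lab f := by
          intro e' he' hee
          have hcoe : (e' : Sym2 V) ≠ s(a, b) := by
            rw [← hab]; exact fun h => hee (Subtype.ext h)
          obtain ⟨hnef, hmem'⟩ := hrest (e' : Sym2 V) he' hcoe
          refine ⟨fun h => hnef (congrArg Subtype.val h), ?_⟩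
          rcases hmem' with hm | hm
          · exact hbd₁ e' hm hee
          · have h1 := hall e' hm
            rw [hagree e' hee, hagree f hfe] at h1
            exact h1
        -- sup over c' equals Z and is attained, contradiction with injectivity
        have hsuple : sSup {x : ENNReal | ∃ e' : G.edgeSet,
            (e' : Sym2 V) ∈ c'.edges ∧ e' ≠ e ∧ x = ENNReal.ofReal (lab e')}
            ≤ ENNReal.ofReal (lab f) := by
          refine sSup_le ?_
          rintro x ⟨e', h1, h2, rfl⟩
          exact ENNReal.ofReal_le_ofReal (hbound e' h1 h2).2
        obtain ⟨e'', h1, h2, h3⟩ := sup_attained lab e c' hc' hec''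
        have hZle := Z_le_sup lab e c' hc' hec''
        have hZeq : sSup {x : ENNReal | ∃ e' : G.edgeSet,
            (e' : Sym2 V) ∈ c'.edges ∧ e' ≠ e ∧ x = ENNReal.ofReal (lab e')}
            = ENNReal.ofReal (lab f) :=
          le_antisymm hsuple ((le_of_eq hZf).trans hZle)
        rw [hZeq] at h3
        have : e'' = f := hinj ((ENNReal.ofReal_eq_ofReal_iff (h0 _) (h0 _)).1 h3.symm)
        exact (hbound e'' h1 h2).1 this

end MSF
end

section
/- Let G be a connected locally finite graph with edge set E, let e ∈ E, and let λ, λ' : E → [0,1] be injective labellings that agree on every edge other than e. If e ∉ F_F(λ) and λ'(e) > Z_λ(e), then F_F(λ') = F_F(λ). -/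
namespace MSF

variable {V : Type*}

/-- Split a walk at an occurrence of an edge. -/
lemma walk_split {G : SimpleGraph V} {s t : V} (W : G.Walk s t)
    {f : Sym2 V} (hf : f ∈ W.edges) :
    ∃ (a b : V) (hab : G.Adj a b) (W₁ : G.Walk s a) (W₂ : G.Walk b t),
      s(a, b) = f ∧ W.edges = W₁.edges ++ s(a, b) :: W₂.edges := by
  induction W with
  | nil => simp at hf
  | @cons u v w h p ih =>
    rw [SimpleGraph.Walk.edges_cons, List.mem_cons] at hf
    rcases hf with hf | hf
    · exact ⟨u, v, h, SimpleGraph.Walk.nil, p, hf.symm, by simp⟩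
    · obtain ⟨a, b, hab, W₁, W₂, heq, hedges⟩ := ih hf
      exact ⟨a, b, hab, SimpleGraph.Walk.cons h W₁, W₂, heq, by simp [hedges]⟩



/-- From a cycle containing `e`, produce a walk between the endpoints of `e` whose
edges are exactly the other edges of the cycle. -/
lemma cycle_delete_edge {G : SimpleGraph V} {w : V} {c : G.Walk w w} (hc : c.IsCycle)
    {e : Sym2 V} (he : e ∈ c.edges) :
    ∃ (a b : V) (P : G.Walk b a), s(a, b) = e ∧ e ∉ P.edges ∧ P.edges.Nodup ∧
      (∀ g, g ∈ P.edges ↔ (g ∈ c.edges ∧ g ≠ e)) := by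
  classical
  obtain ⟨a, b, hab, W₁, W₂, heq, hedges⟩ := walk_split c he
  have hnd : c.edges.Nodup := hc.edges_nodup
  rw [hedges] at hnd
  have hnd' : (W₁.edges ++ W₂.edges).Nodup := by
    refine List.Nodup.sublist ?_ hnd
    exact List.Sublist.append (List.Sublist.refl _) (List.sublist_cons_self _ _)
  have hne : s(a,b) ∉ W₁.edges ∧ s(a,b) ∉ W₂.edges := by
    simp only [List.nodup_append, List.nodup_cons, List.disjoint_cons_right] at hnd
    tauto
  refine ⟨a, b, W₂.append W₁, heq, ?_, ?_, ?_⟩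
  · rw [SimpleGraph.Walk.edges_append, List.mem_append, ← heq]
    rintro (h | h) <;> [exact hne.2 h; exact hne.1 h]
  · rw [SimpleGraph.Walk.edges_append]
    exact (List.perm_append_comm).nodup_iff.mpr hnd'
  · intro g
    rw [SimpleGraph.Walk.edges_append, List.mem_append, hedges, ← heq]
    constructor
    · rintro (h | h)
      · refine ⟨by simp [h], fun hg => hne.2 (hg ▸ h)⟩
      · refine ⟨by simp [h], fun hg => hne.1 (hg ▸ h)⟩
    · rintro ⟨hg, hg'⟩
      rw [List.mem_append, List.mem_cons] at hg
      rcases hg with h | h | h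
      · exact Or.inr h
      · exact absurd h.symm (Ne.symm hg')
      · exact Or.inl h

/-- Cycle surgery: given a cycle `c` through `e` and `f` and a cycle `d` through `e`
avoiding `f`, there is a cycle through `f` avoiding `e` with edges in `c ∪ d`. -/
lemma surgery {G : SimpleGraph V} {w w' : V}
    {c : G.Walk w w} {d : G.Walk w' w'} (hc : c.IsCycle) (hd : d.IsCycle)
    {e f : Sym2 V} (hec : e ∈ c.edges) (hfc : f ∈ c.edges) (hed : e ∈ d.edges)
    (hfd : f ∉ d.edges) (hfe : f ≠ e) :
    ∃ (x : V) (c' : G.Walk x x), c'.IsCycle ∧ f ∈ c'.edges ∧ e ∉ c'.edges ∧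
      ∀ g ∈ c'.edges, g ∈ c.edges ∨ g ∈ d.edges := by
  classical
  obtain ⟨a, b, P, hPab, hPe, hPnd, hPiff⟩ := cycle_delete_edge hc hec
  obtain ⟨a', b', Q, hQab, hQe, hQnd, hQiff⟩ := cycle_delete_edge hd hed
  -- orient Q to go from a to b
  have hsym : s(a', b') = s(a, b) := hQab.trans hPab.symm
  have : ∃ (Q' : G.Walk a b), (∀ g, g ∈ Q'.edges ↔ g ∈ Q.edges) := by
    rw [Sym2.eq_iff] at hsym
    rcases hsym with ⟨rfl, rfl⟩ | ⟨rfl, rfl⟩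
    · exact ⟨Q.reverse, fun g => by simp⟩
    · exact ⟨Q, fun g => Iff.rfl⟩
  obtain ⟨Q', hQ'⟩ := this
  -- the closed walk
  set W : G.Walk b b := P.append Q' with hW
  have hWedges : W.edges = P.edges ++ Q'.edges := SimpleGraph.Walk.edges_append _ _
  have hfW : f ∈ W.edges := by
    rw [hWedges, List.mem_append]
    exact Or.inl ((hPiff f).mpr ⟨hfc, hfe⟩)
  have heW : e ∉ W.edges := by
    rw [hWedges, List.mem_append]
    rintro (h | h)
    · exact hPe h
    · exact hQe ((hQ' e).mp h)
  have hfQ' : f ∉ Q'.edges := fun h => hfd (((hQiff f).mp ((hQ' f).mp h)).1)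
  have hWsub : ∀ g ∈ W.edges, g ∈ c.edges ∨ g ∈ d.edges := by
    intro g hg
    rw [hWedges, List.mem_append] at hg
    rcases hg with h | h
    · exact Or.inl ((hPiff g).mp h).1
    · exact Or.inr ((hQiff g).mp ((hQ' g).mp h)).1
  -- count of f in W.edges is 1
  have hcount : W.edges.count f = 1 := by
    rw [hWedges, List.count_append, List.count_eq_one_of_mem hPnd ((hPiff f).mpr ⟨hfc, hfe⟩),
      List.count_eq_zero.mpr hfQ']
  -- split W at f
  obtain ⟨x, y, hxy, U₁, U₂, hxyf, hUedges⟩ := walk_split W hfW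
  have hfU : f ∉ U₁.edges ∧ f ∉ U₂.edges := by
    rw [hUedges, List.count_append, hxyf, List.count_cons_self] at hcount
    constructor <;> rw [← List.count_eq_zero] <;> omega
  -- the return walk and its bypass
  set R : G.Walk y x := U₂.append U₁ with hR
  have hRsub : ∀ g ∈ R.edges, g ∈ W.edges := by
    intro g hg
    rw [hR, SimpleGraph.Walk.edges_append, List.mem_append] at hg
    rw [hUedges, List.mem_append, List.mem_cons]
    tauto
  have hfR : f ∉ R.edges := by
    rw [hR, SimpleGraph.Walk.edges_append, List.mem_append]
    rintro (h | h) <;> [exact hfU.2 h; exact hfU.1 h]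
  set p : G.Walk y x := R.bypass with hp
  have hpsub : ∀ g ∈ p.edges, g ∈ R.edges := fun g hg =>
    SimpleGraph.Walk.edges_bypass_subset _ hg
  refine ⟨x, SimpleGraph.Walk.cons hxy p, ?_, ?_, ?_, ?_⟩
  · rw [SimpleGraph.Walk.cons_isCycle_iff]
    exact ⟨SimpleGraph.Walk.bypass_isPath _, fun h => hfR (hxyf ▸ hpsub _ h)⟩
  · rw [SimpleGraph.Walk.edges_cons, hxyf]
    exact List.mem_cons_self
  · rw [SimpleGraph.Walk.edges_cons, hxyf, List.mem_cons]
    rintro (rfl | h)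
    · exact hfe rfl
    · exact heW (hRsub _ (hpsub _ h))
  · intro g hg
    rw [SimpleGraph.Walk.edges_cons, hxyf, List.mem_cons] at hg
    rcases hg with rfl | hg
    · exact Or.inl hfc
    · exact hWsub _ (hRsub _ (hpsub _ hg))



/-- A cycle containing `e` contains an edge different from `e`. -/
lemma exists_other_edge {G : SimpleGraph V} {w : V} {c : G.Walk w w} (hc : c.IsCycle)
    {e : Sym2 V} (he : e ∈ c.edges) : ∃ g ∈ c.edges, g ≠ e := by
  have hlen : 3 ≤ c.edges.length := by
    rw [SimpleGraph.Walk.length_edges]; exact hc.three_le_length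
  have hnd : c.edges.Nodup := hc.edges_nodup
  rcases hl : c.edges with _ | ⟨a, _ | ⟨b, t⟩⟩
  · simp [hl] at hlen
  · simp [hl] at hlen
  · rw [hl] at hnd
    have hab : a ≠ b := by simp [List.nodup_cons] at hnd; tauto
    by_cases ha : a = e
    · exact ⟨b, by simp [hl], fun h => hab (ha.trans h.symm)⟩
    · exact ⟨a, by simp [hl], ha⟩

lemma Z_lt_iff {G : SimpleGraph V} (lab : G.edgeSet → ℝ)
    (hrange : ∀ e' : G.edgeSet, 0 ≤ lab e') (e : G.edgeSet) {B : ℝ} :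
    Z G lab e < ENNReal.ofReal B ↔ ∃ (v : V) (c : G.Walk v v), c.IsCycle ∧
      (e : Sym2 V) ∈ c.edges ∧
      ∀ e' : G.edgeSet, (e' : Sym2 V) ∈ c.edges → e' ≠ e → lab e' < B := by
  classical
  constructor
  · intro h
    rw [Z, iInf_lt_iff] at h
    obtain ⟨v, h⟩ := h
    rw [iInf_lt_iff] at h
    obtain ⟨⟨c, hc, hec⟩, h⟩ := h
    refine ⟨v, c, hc, hec, fun e' he' hne => ?_⟩
    have hmem : ENNReal.ofReal (lab e') ∈ {x : ENNReal | ∃ e'' : G.edgeSet,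
        (e'' : Sym2 V) ∈ c.edges ∧ e'' ≠ e ∧ x = ENNReal.ofReal (lab e'')} :=
      ⟨e', he', hne, rfl⟩
    have := (le_sSup hmem).trans_lt h
    exact (ENNReal.ofReal_lt_ofReal_iff_of_nonneg (hrange e')).mp this
  · rintro ⟨v, c, hc, hec, hlt⟩
    set S : Set ENNReal := {x : ENNReal | ∃ e'' : G.edgeSet,
        (e'' : Sym2 V) ∈ c.edges ∧ e'' ≠ e ∧ x = ENNReal.ofReal (lab e'')} with hS
    have hZle : Z G lab e ≤ sSup S := by
      refine iInf_le_of_le v (iInf_le_of_le ⟨c, hc, hec⟩ le_rfl)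
    have hfin : S.Finite := by
      have h1 : {e'' : G.edgeSet | (e'' : Sym2 V) ∈ c.edges}.Finite := by
        refine Set.Finite.preimage (Set.injOn_of_injective Subtype.coe_injective)
          (c.edges.finite_toSet)
      have h2 : S ⊆ (fun e'' : G.edgeSet => ENNReal.ofReal (lab e'')) ''
          {e'' : G.edgeSet | (e'' : Sym2 V) ∈ c.edges} := by
        rintro x ⟨e'', h₁, _, rfl⟩; exact ⟨e'', h₁, rfl⟩
      exact (h1.image _).subset h2
    have hne : S.Nonempty := by
      obtain ⟨g, hg, hgne⟩ := exists_other_edge hc hec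
      have hgE : g ∈ G.edgeSet := c.edges_subset_edgeSet hg
      refine ⟨ENNReal.ofReal (lab ⟨g, hgE⟩), ⟨g, hgE⟩, hg, ?_, rfl⟩
      exact fun h => hgne (congrArg Subtype.val h)
    have hsup : sSup S ∈ S := hne.csSup_mem hfin
    obtain ⟨e₀, he₀, hne₀, heq₀⟩ := hsup
    refine hZle.trans_lt ?_
    rw [heq₀]
    exact (ENNReal.ofReal_lt_ofReal_iff_of_nonneg (hrange e₀)).mpr (hlt e₀ he₀ hne₀)

lemma not_mem_setFF_iff {G : SimpleGraph V} {lab : G.edgeSet → ℝ}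
    (hinj : Function.Injective lab) (hrange : ∀ e' : G.edgeSet, 0 ≤ lab e')
    (e : G.edgeSet) :
    e ∉ setFF G lab ↔ Z G lab e < ENNReal.ofReal (lab e) := by
  classical
  have : e ∉ setFF G lab ↔ ∃ (v : V) (c : G.Walk v v), c.IsCycle ∧ (e : Sym2 V) ∈ c.edges ∧
      ∀ e' : G.edgeSet, (e' : Sym2 V) ∈ c.edges → lab e' ≤ lab e := by
    simp only [setFF, Set.mem_setOf_eq, not_not]
  rw [this, Z_lt_iff lab hrange e]
  constructor
  · rintro ⟨v, c, hc, hec, hle⟩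
    refine ⟨v, c, hc, hec, fun e' he' hne => ?_⟩
    exact lt_of_le_of_ne (hle e' he') (fun h => hne (hinj h))
  · rintro ⟨v, c, hc, hec, hlt⟩
    refine ⟨v, c, hc, hec, fun e' he' => ?_⟩
    by_cases h : e' = e
    · exact le_of_eq (congrArg lab h)
    · exact (hlt e' he' h).le


/-- If `e ∉ F_F(lab)` and `lab' e > Z_lab(e)` then `F_F(lab') = F_F(lab)`. -/
theorem setFF_eq_of_not_mem_of_gt
    {V : Type*} (G : SimpleGraph V) (hconn : G.Connected)
    (hlf : ∀ v : V, (G.neighborSet v).Finite)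
    (e : G.edgeSet) (lab lab' : G.edgeSet → ℝ)
    (hinj : Function.Injective lab) (hinj' : Function.Injective lab')
    (hrange : ∀ e' : G.edgeSet, lab e' ∈ Set.Icc (0 : ℝ) 1)
    (hrange' : ∀ e' : G.edgeSet, lab' e' ∈ Set.Icc (0 : ℝ) 1)
    (hagree : ∀ e' : G.edgeSet, e' ≠ e → lab' e' = lab e')
    (hmem : e ∉ setFF G lab) (hgt : Z G lab e < ENNReal.ofReal (lab' e)) :
    setFF G lab' = setFF G lab := by
  classical
  have hr : ∀ e' : G.edgeSet, 0 ≤ lab e' := fun e' => (hrange e').1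
  have hr' : ∀ e' : G.edgeSet, 0 ≤ lab' e' := fun e' => (hrange' e').1
  have hZe : Z G lab e < ENNReal.ofReal (lab e) :=
    (not_mem_setFF_iff hinj hr e).mp hmem
  -- a helper to restate non-membership
  have hmemdef : ∀ (L : G.edgeSet → ℝ) (f : G.edgeSet),
      (∃ (v : V) (c : G.Walk v v), c.IsCycle ∧ (f : Sym2 V) ∈ c.edges ∧
        ∀ e' : G.edgeSet, (e' : Sym2 V) ∈ c.edges → L e' ≤ L f) → f ∉ setFF G L := by
    intro L f h hf
    exact hf h
  ext f
  rw [← not_iff_not]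
  by_cases hfe : f = e
  · subst hfe
    constructor
    · intro _
      exact hmem
    · intro _
      -- show f ∉ setFF G lab' using hgt
      obtain ⟨v, d, hd, hed, hlt⟩ := (Z_lt_iff lab hr f).mp hgt
      refine hmemdef lab' f ⟨v, d, hd, hed, fun e' he' => ?_⟩
      by_cases h : e' = f
      · exact le_of_eq (congrArg lab' h)
      · rw [hagree e' h]
        exact (hlt e' he' h).le
  · have hlabf : lab' f = lab f := hagree f hfe
    have hcoe : (f : Sym2 V) ≠ (e : Sym2 V) := fun h => hfe (Subtype.coe_injective h)
    constructor
    · -- f ∉ setFF lab' → f ∉ setFF lab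
      intro hf
      simp only [setFF, Set.mem_setOf_eq, not_not] at hf
      obtain ⟨v, c, hc, hfc, hle⟩ := hf
      by_cases hec : (e : Sym2 V) ∈ c.edges
      · -- e is on the witness cycle; reroute around e
        have hlt_e : lab' e < lab' f :=
          lt_of_le_of_ne (hle e hec) (fun h => hfe (hinj' h).symm)
        have hZB : Z G lab e < ENNReal.ofReal (lab f) := by
          refine hgt.trans_le (ENNReal.ofReal_le_ofReal ?_)
          rw [← hlabf]; exact hlt_e.le
        obtain ⟨v', d, hd, hed, hlt⟩ := (Z_lt_iff lab hr e).mp hZB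
        have hfd : (f : Sym2 V) ∉ d.edges := by
          intro h
          exact absurd (hlt f h hfe) (lt_irrefl _)
        obtain ⟨x, c', hc', hfc', hec', hsub⟩ := surgery hc hd hec hfc hed hfd hcoe
        refine hmemdef lab f ⟨x, c', hc', hfc', fun e' he' => ?_⟩
        have hne : e' ≠ e := fun h => hec' (h ▸ he')
        rcases hsub _ he' with h | h
        · rw [← hagree e' hne, ← hlabf]
          exact hle e' h
        · exact (hlt e' h hne).le
      · refine hmemdef lab f ⟨v, c, hc, hfc, fun e' he' => ?_⟩
        have hne : e' ≠ e := fun h => hec (h ▸ he')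
        rw [← hagree e' hne, ← hlabf]
        exact hle e' he'
    · -- f ∉ setFF lab → f ∉ setFF lab'
      intro hf
      simp only [setFF, Set.mem_setOf_eq, not_not] at hf
      obtain ⟨v, c, hc, hfc, hle⟩ := hf
      by_cases hec : (e : Sym2 V) ∈ c.edges
      · have hlt_e : lab e < lab f :=
          lt_of_le_of_ne (hle e hec) (fun h => hfe (hinj h).symm)
        have hZB : Z G lab e < ENNReal.ofReal (lab f) :=
          hZe.trans_le (ENNReal.ofReal_le_ofReal hlt_e.le)
        obtain ⟨v', d, hd, hed, hlt⟩ := (Z_lt_iff lab hr e).mp hZB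
        have hfd : (f : Sym2 V) ∉ d.edges := by
          intro h
          exact absurd (hlt f h hfe) (lt_irrefl _)
        obtain ⟨x, c', hc', hfc', hec', hsub⟩ := surgery hc hd hec hfc hed hfd hcoe
        refine hmemdef lab' f ⟨x, c', hc', hfc', fun e' he' => ?_⟩
        have hne : e' ≠ e := fun h => hec' (h ▸ he')
        rw [hagree e' hne, hlabf]
        rcases hsub _ he' with h | h
        · exact hle e' h
        · exact (hlt e' h hne).le
      · refine hmemdef lab' f ⟨v, c, hc, hfc, fun e' he' => ?_⟩
        have hne : e' ≠ e := fun h => hec (h ▸ he')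
        rw [hagree e' hne, hlabf]
        exact hle e' he'


end MSF
end

section
/- Let G be a connected locally finite graph with edge set E and let λ : E → [0,1] be an injective labelling. Let u and v be two vertices lying in the same connected component of the free minimal spanning forest F_F(λ), and let P be the unique simple path from u to v in F_F(λ). Then for every simple path P' from u to v in G, the maximal label on P is at most the maximal label on P': max{λ(e) : e ∈ P} ≤ max{λ(e) : e ∈ P'}. -/
namespace MSF

variable {V : Type*}

/-- Splitting a walk along an edge it contains. -/
lemma exists_split {G : SimpleGraph V} {u v : V} (p : G.Walk u v) (s : Sym2 V)
    (hs : s ∈ p.edges) :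
    ∃ (x y : V) (h : G.Adj x y) (p1 : G.Walk u x) (p2 : G.Walk y v),
      s = s(x, y) ∧ p.edges = p1.edges ++ s(x, y) :: p2.edges := by
  induction p with
  | nil => simp at hs
  | cons h q ih =>
    rename_i a b c
    rw [SimpleGraph.Walk.edges_cons, List.mem_cons] at hs
    rcases hs with hs | hs
    · exact ⟨a, b, h, SimpleGraph.Walk.nil, q, hs, by simp [hs]⟩
    · obtain ⟨x, y, hxy, p1, p2, hse, hedges⟩ := ih hs
      exact ⟨x, y, hxy, SimpleGraph.Walk.cons h p1, p2, hse, by simp [hedges]⟩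

/-- The unique path in `F_F(lab)` between two vertices of the same component minimizes the
maximal label among all paths in `G` between them: every label on the forest path is
at most the maximal label on any other path. -/
theorem forest_path_minimizes_max_label
    {V : Type*} (G : SimpleGraph V) (hconn : G.Connected)
    (hlf : ∀ v : V, (G.neighborSet v).Finite)
    (lab : G.edgeSet → ℝ) (hinj : Function.Injective lab)
    (hrange : ∀ e : G.edgeSet, lab e ∈ Set.Icc (0 : ℝ) 1)
    (u v : V) (p : G.Walk u v) (hp : p.IsPath)
    (hpF : ∀ e : G.edgeSet, (e : Sym2 V) ∈ p.edges → e ∈ setFF G lab)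
    (p' : G.Walk u v) (hp' : p'.IsPath) :
    ∀ e : G.edgeSet, (e : Sym2 V) ∈ p.edges →
      ∃ e' : G.edgeSet, (e' : Sym2 V) ∈ p'.edges ∧ lab e ≤ lab e' := by
  intro e he
  classical
  set T : Set G.edgeSet := {f | (f : Sym2 V) ∈ p.edges} with hT
  have hTfin : T.Finite := by
    have : T = Subtype.val ⁻¹' {s | s ∈ p.edges} := rfl
    rw [this]
    exact Set.Finite.preimage (Set.injOn_of_injective Subtype.val_injective)
      (p.edges.finite_toSet)
  obtain ⟨e0, he0T, he0max⟩ := Set.exists_max_image T lab hTfin ⟨e, he⟩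
  suffices h : ∃ e' : G.edgeSet, (e' : Sym2 V) ∈ p'.edges ∧ lab e0 ≤ lab e' by
    obtain ⟨e', h1, h2⟩ := h
    exact ⟨e', h1, le_trans (he0max e he) h2⟩
  by_contra hcon
  push_neg at hcon
  obtain ⟨x, y, hxy, p1, p2, hse, hedges⟩ := exists_split p _ he0T
  have hnd := hp.isTrail.edges_nodup
  rw [hedges] at hnd
  have he0p1 : s(x, y) ∉ p1.edges := by
    intro h
    exact (List.disjoint_of_nodup_append hnd) h List.mem_cons_self
  have he0p2 : s(x, y) ∉ p2.edges := by
    have := (List.nodup_append'.mp hnd).2.1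
    exact (List.nodup_cons.mp this).1
  have key : ∀ f : G.edgeSet, (f : Sym2 V) ∈ p.edges → f ≠ e0 → lab f < lab e0 :=
    fun f hf hne => lt_of_le_of_ne (he0max f hf) (fun h => hne (hinj h))
  -- the detour walk from y to x avoiding e0
  set w : G.Walk y x := p2.append (p'.reverse.append p1) with hwdef
  have hw : ∀ f : G.edgeSet, (f : Sym2 V) ∈ w.edges → lab f < lab e0 := by
    intro f hf
    rw [hwdef, SimpleGraph.Walk.edges_append, SimpleGraph.Walk.edges_append,
      SimpleGraph.Walk.edges_reverse] at hf
    rcases List.mem_append.mp hf with hf | hf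
    · refine key f ?_ ?_
      · rw [hedges]; exact List.mem_append.mpr (Or.inr (List.mem_cons_of_mem _ hf))
      · intro h; rw [h, hse] at hf; exact he0p2 hf
    rcases List.mem_append.mp hf with hf | hf
    · exact hcon f (List.mem_reverse.mp hf)
    · refine key f ?_ ?_
      · rw [hedges]; exact List.mem_append.mpr (Or.inl hf)
      · intro h; rw [h, hse] at hf; exact he0p1 hf
  set q := w.toPath with hqdef
  have hq1 : s(x, y) ∉ (q : G.Walk y x).edges := by
    intro h
    have := hw e0 (by rw [hse]; exact SimpleGraph.Walk.edges_toPath_subset w h)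
    exact lt_irrefl _ this
  have hcyc := SimpleGraph.Path.cons_isCycle q hxy hq1
  refine hpF e0 he0T ⟨x, SimpleGraph.Walk.cons hxy (q : G.Walk y x), hcyc, ?_, ?_⟩
  · rw [hse]; simp
  · intro e' he'
    rw [SimpleGraph.Walk.edges_cons, List.mem_cons] at he'
    rcases he' with he' | he'
    · have : e' = e0 := Subtype.ext (by rw [he', ← hse])
      rw [this]
    · exact le_of_lt (hw e' (SimpleGraph.Walk.edges_toPath_subset w he'))

end MSF
end
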